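/- Let λ > 0 and let q : ℝ → Quaternion ℝ be differentiable with ‖q(t)‖ = 1 for all t ≥ 0 and satisfy q'(t) = (1/2) · q(t) * ⟦−λ · sgn₊(q°(t)) · q⃗(t)⟧ for all t ≥ 0. Then, for every such solution (with arbitrary unit initial condition, including ‖q⃗(0)‖ = 1), there exist constants C ≥ 0 and μ > 0 such that ‖q⃗(t)‖ ≤ C · exp(−μ t) for all t ≥ 0; in particular q(t) converges to 1 or to −1, both of which represent the identity rotation. (Global exponential convergence of the error quaternion to the identity quaternion.) -/

import Mathlib

noncomputable section

open Filter Topology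

/-- `sgn₊ x = 1` if `x ≥ 0` and `-1` if `x < 0`. -/
def sgnPlus (x : ℝ) : ℝ := if 0 ≤ x then 1 else -1

/-- The vector (imaginary) part of a quaternion, as a vector in Euclidean `ℝ³`. -/
def vecPart (p : Quaternion ℝ) : EuclideanSpace ℝ (Fin 3) := WithLp.toLp 2 ![p.imI, p.imJ, p.imK]

/-- The pure-imaginary quaternion `⟦v⟧` with vector part `v`. -/
def quatOfVec (v : EuclideanSpace ℝ (Fin 3)) : Quaternion ℝ := ⟨0, v 0, v 1, v 2⟩

/- Auxiliary material -/

def reCLM : Quaternion ℝ →L[ℝ] ℝ := ⟨QuaternionAlgebra.reₗ _ _ _, Quaternion.continuous_re⟩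
def imICLM : Quaternion ℝ →L[ℝ] ℝ := ⟨QuaternionAlgebra.imIₗ _ _ _, Quaternion.continuous_imI⟩
def imJCLM : Quaternion ℝ →L[ℝ] ℝ := ⟨QuaternionAlgebra.imJₗ _ _ _, Quaternion.continuous_imJ⟩
def imKCLM : Quaternion ℝ →L[ℝ] ℝ := ⟨QuaternionAlgebra.imKₗ _ _ _, Quaternion.continuous_imK⟩

lemma hd_re {f : ℝ → Quaternion ℝ} {f' : Quaternion ℝ} {t : ℝ} (h : HasDerivAt f f' t) :
    HasDerivAt (fun s => (f s).re) f'.re t :=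
  (reCLM.hasFDerivAt.comp_hasDerivAt t h : HasDerivAt (fun s => reCLM (f s)) _ t)
lemma hd_imI {f : ℝ → Quaternion ℝ} {f' : Quaternion ℝ} {t : ℝ} (h : HasDerivAt f f' t) :
    HasDerivAt (fun s => (f s).imI) f'.imI t :=
  (imICLM.hasFDerivAt.comp_hasDerivAt t h : HasDerivAt (fun s => imICLM (f s)) _ t)
lemma hd_imJ {f : ℝ → Quaternion ℝ} {f' : Quaternion ℝ} {t : ℝ} (h : HasDerivAt f f' t) :
    HasDerivAt (fun s => (f s).imJ) f'.imJ t :=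
  (imJCLM.hasFDerivAt.comp_hasDerivAt t h : HasDerivAt (fun s => imJCLM (f s)) _ t)
lemma hd_imK {f : ℝ → Quaternion ℝ} {f' : Quaternion ℝ} {t : ℝ} (h : HasDerivAt f f' t) :
    HasDerivAt (fun s => (f s).imK) f'.imK t :=
  (imKCLM.hasFDerivAt.comp_hasDerivAt t h : HasDerivAt (fun s => imKCLM (f s)) _ t)

lemma rhs_re (p : Quaternion ℝ) (c : ℝ) :
    ((1/2:ℝ) • (p * quatOfVec (c • vecPart p))).re
      = -(1/2) * c * (p.imI^2 + p.imJ^2 + p.imK^2) := by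
  rw [Quaternion.re_smul, Quaternion.re_mul]; simp [quatOfVec, vecPart]; ring
lemma rhs_imI (p : Quaternion ℝ) (c : ℝ) :
    ((1/2:ℝ) • (p * quatOfVec (c • vecPart p))).imI = (1/2) * c * p.re * p.imI := by
  rw [Quaternion.imI_smul, Quaternion.imI_mul]; simp [quatOfVec, vecPart]; ring
lemma rhs_imJ (p : Quaternion ℝ) (c : ℝ) :
    ((1/2:ℝ) • (p * quatOfVec (c • vecPart p))).imJ = (1/2) * c * p.re * p.imJ := by
  rw [Quaternion.imJ_smul, Quaternion.imJ_mul]; simp [quatOfVec, vecPart]; ring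
lemma rhs_imK (p : Quaternion ℝ) (c : ℝ) :
    ((1/2:ℝ) • (p * quatOfVec (c • vecPart p))).imK = (1/2) * c * p.re * p.imK := by
  rw [Quaternion.imK_smul, Quaternion.imK_mul]; simp [quatOfVec, vecPart]; ring

lemma norm_vecPart (p : Quaternion ℝ) :
    ‖vecPart p‖ = Real.sqrt (p.imI^2 + p.imJ^2 + p.imK^2) := by
  rw [EuclideanSpace.norm_eq]
  simp [vecPart, Fin.sum_univ_three, Real.norm_eq_abs, sq_abs]

lemma unit_sum (p : Quaternion ℝ) (h : ‖p‖ = 1) :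
    p.re^2 + (p.imI^2 + p.imJ^2 + p.imK^2) = 1 := by
  have := Quaternion.normSq_eq_norm_mul_self (a := p)
  rw [h, Quaternion.normSq_def'] at this
  linarith [this]

lemma norm_im (p : Quaternion ℝ) :
    ‖p.im‖ = Real.sqrt (p.imI^2 + p.imJ^2 + p.imK^2) := by
  have h : Quaternion.normSq p.im = p.imI^2 + p.imJ^2 + p.imK^2 := by
    rw [Quaternion.normSq_def']; simp
  rw [← h, Quaternion.normSq_eq_norm_mul_self, Real.sqrt_mul_self (norm_nonneg _)]

lemma sgnPlus_mul_self (x : ℝ) : sgnPlus x * x = |x| := by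
  unfold sgnPlus
  split
  · rw [abs_of_nonneg ‹_›]; ring
  · rw [abs_of_neg (lt_of_not_ge ‹_›)]; ring

theorem sliding_surface_global_exponential_convergence
    (lam : ℝ) (hlam : 0 < lam) (q : ℝ → Quaternion ℝ)
    (hq : Differentiable ℝ q)
    (hunit : ∀ t ≥ (0 : ℝ), ‖q t‖ = 1)
    (hdyn : ∀ t ≥ (0 : ℝ), deriv q t =
      (1 / 2 : ℝ) • (q t * quatOfVec ((-(lam * sgnPlus (q t).re)) • vecPart (q t)))) :
    (∃ C ≥ (0 : ℝ), ∃ μ > (0 : ℝ), ∀ t ≥ (0 : ℝ),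
      ‖vecPart (q t)‖ ≤ C * Real.exp (-μ * t)) ∧
    (Tendsto q atTop (𝓝 1) ∨ Tendsto q atTop (𝓝 (-1))) := by
  set η : ℝ → ℝ := fun t => (q t).re with hηdef
  set N : ℝ → ℝ := fun t => (q t).imI^2 + (q t).imJ^2 + (q t).imK^2 with hNdef
  -- basic component differentiability
  have hdq : ∀ t, HasDerivAt q (deriv q t) t := fun t => (hq t).hasDerivAt
  -- derivative of η on t ≥ 0
  have hη' : ∀ t ≥ (0:ℝ), HasDerivAt η ((lam/2) * sgnPlus (η t) * N t) t := by
    intro t ht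
    have h := hd_re (hdq t)
    rw [hdyn t ht, rhs_re] at h
    convert h using 1
    ring
  -- derivative of N on t ≥ 0
  have hN' : ∀ t ≥ (0:ℝ), HasDerivAt N (-lam * |η t| * N t) t := by
    intro t ht
    have hI := hd_imI (hdq t); have hJ := hd_imJ (hdq t); have hK := hd_imK (hdq t)
    rw [hdyn t ht, rhs_imI] at hI
    rw [hdyn t ht, rhs_imJ] at hJ
    rw [hdyn t ht, rhs_imK] at hK
    have h := ((hI.pow 2).add (hJ.pow 2)).add (hK.pow 2)
    refine h.congr_deriv (Eq.symm ?_)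
    have hs : sgnPlus (η t) * η t = |η t| := sgnPlus_mul_self _
    rw [← hs]
    simp only [hNdef, hηdef]
    norm_num
    ring
  -- N is nonnegative and, for t ≥ 0, N = 1 - η²
  have hNpos : ∀ t, 0 ≤ N t := fun t => by positivity
  have hNval : ∀ t ≥ (0:ℝ), N t = 1 - η t ^ 2 := by
    intro t ht
    have := unit_sum (q t) (hunit t ht)
    simp only [hNdef, hηdef]
    linarith [this]
  have hNle1 : ∀ t ≥ (0:ℝ), N t ≤ 1 := by
    intro t ht; rw [hNval t ht]; nlinarith [sq_nonneg (η t)]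
  -- y := η² is monotone on [0, ∞)
  have hηdiff : Differentiable ℝ η := fun t => (hd_re (hdq t)).differentiableAt
  have hy' : ∀ t ≥ (0:ℝ), HasDerivAt (fun s => η s ^ 2) (lam * |η t| * N t) t := by
    intro t ht
    have h := (hη' t ht).pow 2
    refine h.congr_deriv (Eq.symm ?_)
    have hs : sgnPlus (η t) * η t = |η t| := sgnPlus_mul_self _
    rw [← hs]
    norm_num
    ring
  have hymono : MonotoneOn (fun s => η s ^ 2) (Set.Ici (0:ℝ)) := by
    apply monotoneOn_of_deriv_nonneg (convex_Ici 0)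
      ((hηdiff.pow 2).continuous.continuousOn)
      ((hηdiff.pow 2).differentiableOn)
    intro x hx
    rw [interior_Ici] at hx
    rw [show (η ^ 2) = (fun s => η s ^ 2) from rfl, (hy' x (le_of_lt hx)).deriv]
    have := hNpos x
    positivity
  -- η(1)² > 0
  have hy1 : 0 < η 1 ^ 2 := by
    by_contra h
    push_neg at h
    have hy1z : η 1 ^ 2 = 0 := le_antisymm h (sq_nonneg _)
    have hzero : ∀ s ∈ Set.Icc (0:ℝ) 1, η s = 0 := by
      intro s hs
      have h1 : η s ^ 2 ≤ η 1 ^ 2 := hymono hs.1 (by norm_num) hs.2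
      have : η s ^ 2 = 0 := le_antisymm (hy1z ▸ h1) (sq_nonneg _)
      exact pow_eq_zero_iff (n := 2) (by norm_num) |>.mp this
    have hev : (fun s => η s) =ᶠ[𝓝 (1/2 : ℝ)] fun _ => 0 := by
      have : Set.Ioo (0:ℝ) 1 ∈ 𝓝 (1/2 : ℝ) := Ioo_mem_nhds (by norm_num) (by norm_num)
      filter_upwards [this] with s hs
      exact hzero s ⟨hs.1.le, hs.2.le⟩
    have hd0 : deriv η (1/2 : ℝ) = 0 := by
      rw [hev.deriv_eq]; simp
    have hd1 : deriv η (1/2 : ℝ) = (lam/2) * sgnPlus (η (1/2)) * N (1/2) := by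
      exact (hη' (1/2) (by norm_num)).deriv
    have hη12 : η (1/2 : ℝ) = 0 := hzero _ (by norm_num)
    rw [hNval (1/2) (by norm_num), hη12] at hd1
    rw [hd0] at hd1
    simp [sgnPlus] at hd1
    linarith
  set b : ℝ := |η 1| with hbdef
  have hb : 0 < b := by
    rw [hbdef]
    exact abs_pos.mpr (fun h => by simp [h] at hy1)
  -- for t ≥ 1, |η t| ≥ b
  have habs : ∀ t ≥ (1:ℝ), b ≤ |η t| := by
    intro t ht
    have h1 : η 1 ^ 2 ≤ η t ^ 2 := hymono (Set.mem_Ici.mpr (by norm_num)) (Set.mem_Ici.mpr (by linarith)) ht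
    have := Real.sqrt_le_sqrt h1
    rwa [Real.sqrt_sq_eq_abs, Real.sqrt_sq_eq_abs] at this
  -- Grönwall: g := N * exp (lam * b * t) is antitone on [1, ∞)
  have hNdiff : Differentiable ℝ N := by
    have hI : Differentiable ℝ (fun s => (q s).imI) := fun t => (hd_imI (hdq t)).differentiableAt
    have hJ : Differentiable ℝ (fun s => (q s).imJ) := fun t => (hd_imJ (hdq t)).differentiableAt
    have hK : Differentiable ℝ (fun s => (q s).imK) := fun t => (hd_imK (hdq t)).differentiableAt
    exact ((hI.pow 2).add (hJ.pow 2)).add (hK.pow 2)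
  set g : ℝ → ℝ := fun t => N t * Real.exp (lam * b * t) with hgdef
  have hexp' : ∀ t : ℝ, HasDerivAt (fun s => Real.exp (lam * b * s))
      (Real.exp (lam * b * t) * (lam * b)) t := by
    intro t
    have h := ((hasDerivAt_id t).const_mul (lam * b)).exp
    simpa using h
  have hgdiff : Differentiable ℝ g := by
    apply hNdiff.mul
    exact fun t => (hexp' t).differentiableAt
  have hganti : AntitoneOn g (Set.Ici (1:ℝ)) := by
    apply antitoneOn_of_deriv_nonpos (convex_Ici 1) hgdiff.continuous.continuousOn
      hgdiff.differentiableOn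
    intro x hx
    rw [interior_Ici] at hx
    have hx1 : (1:ℝ) ≤ x := hx.le
    have hx0 : (0:ℝ) ≤ x := by linarith
    have hg' : HasDerivAt g ((-lam * |η x| * N x) * Real.exp (lam * b * x)
        + N x * (Real.exp (lam * b * x) * (lam * b))) x := (hN' x hx0).mul (hexp' x)
    rw [hg'.deriv]
    have h1 : b ≤ |η x| := habs x hx1
    have h2 : 0 ≤ N x := hNpos x
    have h3 : 0 < Real.exp (lam * b * x) := Real.exp_pos _
    nlinarith [mul_le_mul_of_nonneg_right h1 (mul_nonneg h2 h3.le),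
      mul_nonneg h2 h3.le]
  -- global bound on N
  have hNbound : ∀ t ≥ (0:ℝ), N t ≤ Real.exp (lam * b) * Real.exp (-(lam * b) * t) := by
    intro t ht
    rcases le_or_gt t 1 with h1 | h1
    · have : (1:ℝ) ≤ Real.exp (lam * b) * Real.exp (-(lam * b) * t) := by
        rw [← Real.exp_add]
        apply Real.one_le_exp
        nlinarith [mul_nonneg (mul_nonneg hlam.le hb.le) (sub_nonneg.mpr h1)]
      exact le_trans (hNle1 t ht) this
    · have hgle : g t ≤ g 1 := hganti (by norm_num) (Set.mem_Ici.mpr h1.le) h1.le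
      have hg1 : g 1 ≤ Real.exp (lam * b) := by
        simp only [hgdef, mul_one]
        have := hNle1 1 (by norm_num)
        nlinarith [Real.exp_pos (lam * b)]
      have key : N t * Real.exp (lam * b * t) ≤ Real.exp (lam * b) := le_trans hgle hg1
      have hpos : (0:ℝ) < Real.exp (lam * b * t) := Real.exp_pos _
      rw [← Real.exp_add]
      have heq : Real.exp (lam * b + -(lam * b) * t) * Real.exp (lam * b * t)
          = Real.exp (lam * b) := by
        rw [← Real.exp_add]; ring_nf
      nlinarith [key, heq, hpos]
  -- exponential bound on ‖vecPart (q t)‖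
  have hCdef : (0:ℝ) ≤ Real.exp (lam * b / 2) := (Real.exp_pos _).le
  have hexpbound : ∀ t ≥ (0:ℝ), ‖vecPart (q t)‖
      ≤ Real.exp (lam * b / 2) * Real.exp (-(lam * b / 2) * t) := by
    intro t ht
    rw [norm_vecPart]
    have hsq : Real.exp (lam * b) * Real.exp (-(lam * b) * t)
        = (Real.exp (lam * b / 2) * Real.exp (-(lam * b / 2) * t))^2 := by
      simp only [pow_two, ← Real.exp_add, mul_pow]
      congr 1
      ring
    have h1 : N t ≤ (Real.exp (lam * b / 2) * Real.exp (-(lam * b / 2) * t))^2 := by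
      rw [← hsq]; exact hNbound t ht
    calc Real.sqrt (N t) ≤ Real.sqrt ((Real.exp (lam * b / 2) * Real.exp (-(lam * b / 2) * t))^2) :=
          Real.sqrt_le_sqrt h1
      _ = Real.exp (lam * b / 2) * Real.exp (-(lam * b / 2) * t) := by
          rw [Real.sqrt_sq (by positivity)]
  constructor
  · exact ⟨Real.exp (lam * b / 2), hCdef, lam * b / 2, by positivity, hexpbound⟩
  -- convergence of q
  have hN0 : Tendsto N atTop (𝓝 0) := by
    apply squeeze_zero' (Eventually.of_forall hNpos)
      ((eventually_ge_atTop (0:ℝ)).mono fun t ht => hNbound t ht)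
    have h1 : Tendsto (fun t : ℝ => lam * b * t) atTop atTop :=
      Tendsto.const_mul_atTop (by positivity) tendsto_id
    have h2 : Tendsto (fun t : ℝ => -(lam * b) * t) atTop atBot := by
      have heq : (fun t : ℝ => -(lam * b) * t) = (fun x : ℝ => -x) ∘ (fun t : ℝ => lam * b * t) := by
        funext t; simp [Function.comp]
      rw [heq]
      exact tendsto_neg_atTop_atBot.comp h1
    have h3 : Tendsto (fun t : ℝ => Real.exp (-(lam * b) * t)) atTop (𝓝 0) :=
      Real.tendsto_exp_atBot.comp h2
    simpa using h3.const_mul (Real.exp (lam * b))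
  have hsqrtN0 : Tendsto (fun t => Real.sqrt (N t)) atTop (𝓝 0) := by
    have := (Real.continuous_sqrt.tendsto 0).comp hN0
    simpa [Function.comp_def] using this
  -- η has constant sign on [1, ∞)
  have hηcont : Continuous η := hηdiff.continuous
  have hηne : ∀ t ≥ (1:ℝ), η t ≠ 0 := by
    intro t ht h
    have := habs t ht
    rw [h] at this
    simp at this
    linarith
  have hη1ne : η 1 ≠ 0 := hηne 1 le_rfl
  -- bound η² ≤ 1 for t ≥ 0
  have hηle1 : ∀ t ≥ (0:ℝ), η t ^ 2 ≤ 1 := by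
    intro t ht
    have := hNval t ht
    have := hNpos t
    linarith
  rcases hη1ne.lt_or_gt with hneg | hpos
  · -- η 1 < 0: q → -1
    right
    have hsign : ∀ t ≥ (1:ℝ), η t < 0 := by
      intro t ht
      by_contra h
      push_neg at h
      have h0 : (0:ℝ) ∈ Set.Icc (η 1) (η t) := ⟨hneg.le, h⟩
      obtain ⟨c, hc, hc0⟩ := intermediate_value_Icc ht (hηcont.continuousOn) h0
      exact hηne c hc.1 hc0
    have hbound : ∀ t ≥ (1:ℝ), ‖q t - (-1)‖ ≤ N t + Real.sqrt (N t) := by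
      intro t ht
      have ht0 : (0:ℝ) ≤ t := by linarith
      have hdecomp : q t - (-1) = ((η t + 1 : ℝ) : Quaternion ℝ) + (q t).im := by
        simp only [hηdef]
        conv_lhs => rw [← Quaternion.re_add_im (q t)]
        push_cast
        abel
      rw [hdecomp]
      have h1 : ‖((η t + 1 : ℝ) : Quaternion ℝ)‖ = |η t + 1| := Quaternion.norm_coe _
      have h2 : |η t + 1| ≤ N t := by
        have hlb : -1 ≤ η t := by nlinarith [hηle1 t ht0]
        have hub := (hsign t ht).le
        rw [abs_of_nonneg (by linarith)]
        rw [hNval t ht0]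
        nlinarith
      calc ‖((η t + 1 : ℝ) : Quaternion ℝ) + (q t).im‖
          ≤ ‖((η t + 1 : ℝ) : Quaternion ℝ)‖ + ‖(q t).im‖ := norm_add_le _ _
        _ ≤ N t + Real.sqrt (N t) := by
            rw [h1, norm_im]
            exact add_le_add h2 le_rfl
    rw [tendsto_iff_norm_sub_tendsto_zero]
    apply squeeze_zero' (Eventually.of_forall fun t => norm_nonneg _)
      ((eventually_ge_atTop (1:ℝ)).mono fun t ht => hbound t ht)
    simpa using hN0.add hsqrtN0
  · -- η 1 > 0: q → 1
    left
    have hsign : ∀ t ≥ (1:ℝ), 0 < η t := by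
      intro t ht
      by_contra h
      push_neg at h
      have h0 : (0:ℝ) ∈ Set.Icc (η t) (η 1) := ⟨h, hpos.le⟩
      obtain ⟨c, hc, hc0⟩ := intermediate_value_Icc' ht (hηcont.continuousOn) h0
      exact hηne c hc.1 hc0
    have hbound : ∀ t ≥ (1:ℝ), ‖q t - 1‖ ≤ N t + Real.sqrt (N t) := by
      intro t ht
      have ht0 : (0:ℝ) ≤ t := by linarith
      have hdecomp : q t - 1 = ((η t - 1 : ℝ) : Quaternion ℝ) + (q t).im := by
        simp only [hηdef]
        conv_lhs => rw [← Quaternion.re_add_im (q t)]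
        push_cast
        abel
      rw [hdecomp]
      have h1 : ‖((η t - 1 : ℝ) : Quaternion ℝ)‖ = |η t - 1| := Quaternion.norm_coe _
      have h2 : |η t - 1| ≤ N t := by
        have hub : η t ≤ 1 := by nlinarith [hηle1 t ht0]
        have hlb := (hsign t ht).le
        rw [abs_of_nonpos (by linarith)]
        rw [hNval t ht0]
        nlinarith
      calc ‖((η t - 1 : ℝ) : Quaternion ℝ) + (q t).im‖
          ≤ ‖((η t - 1 : ℝ) : Quaternion ℝ)‖ + ‖(q t).im‖ := norm_add_le _ _
        _ ≤ N t + Real.sqrt (N t) := by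
            rw [h1, norm_im]
            exact add_le_add h2 le_rfl
    rw [tendsto_iff_norm_sub_tendsto_zero]
    apply squeeze_zero' (Eventually.of_forall fun t => norm_nonneg _)
      ((eventually_ge_atTop (1:ℝ)).mono fun t ht => hbound t ht)
    simpa using hN0.add hsqrtN0
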